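/- Let d ≥ 1, s ∈ ℝ, 0 < p, q ≤ ∞, a > 0. For any (z,r) ∈ G = ℝ^d × (0,∞), the left translation L_{(z,r)} maps Ṗ^{s,a}_{p,q}(G) to itself with operator norm exactly r^{d(1/p−1/q)−s}, i.e. ‖L_{(z,r)}F | Ṗ^{s,a}_{p,q}‖ = r^{d(1/p−1/q)−s} ‖F | Ṗ^{s,a}_{p,q}‖ for every measurable F on G; and the right translation R_{(z,r)} is bounded on Ṗ^{s,a}_{p,q}(G) with ‖R_{(z,r)}F | Ṗ^{s,a}_{p,q}‖ ≤ r^{s+d/q} max{1, r^{−a}} (1+|z|)^a ‖F | Ṗ^{s,a}_{p,q}‖ for every measurable F on G. -/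

import Mathlib

open MeasureTheory Real SchwartzMap Set
open scoped ENNReal NNReal FourierTransform

noncomputable section

/-- `d`-dimensional Euclidean space. -/
abbrev Ed (d : ℕ) : Type := EuclideanSpace ℝ (Fin d)

/-- Complex-valued Schwartz functions on `ℝ^d`. -/
abbrev SchwartzC (d : ℕ) := SchwartzMap (Ed d) ℂ

/-- Tempered distributions on `ℝ^d`. -/
abbrev TemperedDist (d : ℕ) := SchwartzC d →L[ℂ] ℂ

variable {d : ℕ}

lemma affine_htg (a : Ed d) (L : Ed d →L[ℝ] Ed d) :
    Function.HasTemperateGrowth (fun y : Ed d => a + L y) := by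
  apply Function.HasTemperateGrowth.of_fderiv (k := 1) (C := ‖a‖ + ‖L‖)
  · have h : (fderiv ℝ fun y : Ed d => a + L y) = fun _ => (L : Ed d →L[ℝ] Ed d) := by
      funext y
      rw [fderiv_const_add]
      exact L.fderiv
    rw [h]
    exact .const _
  · exact (differentiable_const a).add L.differentiable
  · intro y
    have h1 : ‖a + L y‖ ≤ ‖a‖ + ‖L‖ * ‖y‖ :=
      (norm_add_le _ _).trans (by gcongr; exact L.le_opNorm y)
    have h2 : (0:ℝ) ≤ ‖a‖ := norm_nonneg a
    have h3 : (0:ℝ) ≤ ‖L‖ := norm_nonneg L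
    have h4 : (0:ℝ) ≤ ‖y‖ := norm_nonneg y
    nlinarith

lemma htg_shiftdil (x : Ed d) (c : ℝ) :
    Function.HasTemperateGrowth (fun y : Ed d => c • (x - y)) := by
  have h : (fun y : Ed d => c • (x - y))
      = fun y => c • x + ((-c) • ContinuousLinearMap.id ℝ (Ed d)) y := by
    funext y
    simp [smul_sub, sub_eq_add_neg, neg_smul]
  rw [h]
  exact affine_htg _ _

/-- The Schwartz function `y ↦ Φ (t⁻¹ • (x - y))`. -/
def shiftDil (Φ : SchwartzC d) (x : Ed d) {t : ℝ} (ht : 0 < t) : SchwartzC d :=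
  SchwartzMap.compCLM ℂ (htg_shiftdil x t⁻¹)
    ⟨1, ‖x‖ + t, by
      intro y
      have h1 : ‖t⁻¹ • (x - y)‖ = t⁻¹ * ‖x - y‖ := by
        rw [norm_smul, Real.norm_eq_abs, abs_of_pos (by positivity)]
      have h2 : ‖y‖ ≤ ‖x‖ + ‖x - y‖ := by
        have hy : y = x - (x - y) := by abel
        calc ‖y‖ = ‖x - (x - y)‖ := by rw [← hy]
        _ ≤ ‖x‖ + ‖x - y‖ := norm_sub_le _ _
      have h3 : ‖x - y‖ = t * ‖t⁻¹ • (x - y)‖ := by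
        rw [h1]; field_simp
      have h4 : (0:ℝ) ≤ ‖t⁻¹ • (x - y)‖ := norm_nonneg _
      have h5 : (0:ℝ) ≤ ‖x‖ := norm_nonneg x
      calc ‖y‖ ≤ ‖x‖ + t * ‖t⁻¹ • (x - y)‖ := by rw [← h3]; exact h2
      _ ≤ (‖x‖ + t) * (1 + ‖t⁻¹ • (x - y)‖) ^ 1 := by nlinarith⟩ Φ

/-- `(Φ_t ∗ f)(x) = f (Φ_t (x - ·))` where `Φ_t = t^{-d} Φ(·/t)`; set to `0` for `t ≤ 0`. -/
def convAt (f : TemperedDist d) (Φ : SchwartzC d) (t : ℝ) (x : Ed d) : ℂ :=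
  if ht : 0 < t then ((t : ℂ) ^ d)⁻¹ * f (shiftDil Φ x ht) else 0

/-- Extended nonnegative norm of a complex number. -/
def enn (z : ℂ) : ℝ≥0∞ := (‖z‖₊ : ℝ≥0∞)

/-- The Peetre maximal function `(Φ_t^∗ f)_a (x)`. -/
def peetreAt (f : TemperedDist d) (Φ : SchwartzC d) (a t : ℝ) (x : Ed d) : ℝ≥0∞ :=
  ⨆ y : Ed d, enn (convAt f Φ t (x + y)) / ENNReal.ofReal ((1 + ‖y‖ / t) ^ a)

/-- `L_p`-quasinorm (with values in `[0,∞]`) of an extended-valued function, `0 < p ≤ ∞`. -/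
def lpE (p : ℝ≥0∞) (F : Ed d → ℝ≥0∞) : ℝ≥0∞ :=
  if p = ∞ then essSup F volume
  else (∫⁻ x, F x ^ p.toReal) ^ (1 / p.toReal)

/-- `(∫_S G(t)^q w(t) dt)^{1/q}` with the usual modification (`sup` over `S`) for `q = ∞`. -/
def intAgg (q : ℝ≥0∞) (S : Set ℝ) (w : ℝ → ℝ) (G : ℝ → ℝ≥0∞) : ℝ≥0∞ :=
  if q = ∞ then ⨆ t ∈ S, G t
  else (∫⁻ t in S, G t ^ q.toReal * ENNReal.ofReal (w t)) ^ (1 / q.toReal)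

/-- `(Σ_{k∈ℕ} G(k)^q)^{1/q}` with the usual modification for `q = ∞`. -/
def sumAggN (q : ℝ≥0∞) (G : ℕ → ℝ≥0∞) : ℝ≥0∞ :=
  if q = ∞ then ⨆ k, G k else (∑' k, G k ^ q.toReal) ^ (1 / q.toReal)

/-- `(Σ_{k∈ℤ} G(k)^q)^{1/q}` with the usual modification for `q = ∞`. -/
def sumAggZ (q : ℝ≥0∞) (G : ℤ → ℝ≥0∞) : ℝ≥0∞ :=
  if q = ∞ then ⨆ k, G k else (∑' k, G k ^ q.toReal) ^ (1 / q.toReal)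

/-- Tent (Lusin) aggregation `(∫_S ∫_{|z|<t} H(t,z)^q dz dt/t^{d+1})^{1/q}`,
with the usual modification for `q = ∞`. -/
def tentAgg (q : ℝ≥0∞) (S : Set ℝ) (H : ℝ → Ed d → ℝ≥0∞) : ℝ≥0∞ :=
  if q = ∞ then ⨆ t ∈ S, ⨆ z ∈ Metric.ball (0 : Ed d) t, H t z
  else (∫⁻ t in S, (∫⁻ z in Metric.ball (0 : Ed d) t, H t z ^ q.toReal) *
      ENNReal.ofReal (t ^ (-(d : ℝ) - 1))) ^ (1 / q.toReal)

/-- Inhomogeneous kernel family: `Φ₀` for `j = 0` and `Φ` for `j ≥ 1`. -/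
def kin (Φ₀ Φ : SchwartzC d) (j : ℕ) : SchwartzC d := if j = 0 then Φ₀ else Φ

/-- Dyadic scale `2^{-j}`, `j ∈ ℕ`. -/
def scN (j : ℕ) : ℝ := (2 : ℝ) ^ (-(j : ℤ))

/-- Dyadic scale `2^{-k}`, `k ∈ ℤ`. -/
def scZ (k : ℤ) : ℝ := (2 : ℝ) ^ (-k)

/-- Tauberian condition for the pair `(Φ₀, Φ)` with parameter `ε`. -/
def TauberianPair (Φ₀ Φ : SchwartzC d) (ε : ℝ) : Prop :=
  (∀ ξ : Ed d, ‖ξ‖ < 2 * ε → 𝓕 ⇑Φ₀ ξ ≠ 0) ∧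
  (∀ ξ : Ed d, ε / 2 < ‖ξ‖ → ‖ξ‖ < 2 * ε → 𝓕 ⇑Φ ξ ≠ 0)

/-- Homogeneous Tauberian condition for `Φ` with parameter `ε`. -/
def TauberianHom (Φ : SchwartzC d) (ε : ℝ) : Prop :=
  ∀ ξ : Ed d, ε / 2 < ‖ξ‖ → ‖ξ‖ < 2 * ε → 𝓕 ⇑Φ ξ ≠ 0

/-- Moment condition of order `R`: all derivatives of `ℱΦ` of order `≤ R` vanish at `0`. -/
def MomentCond (Φ : SchwartzC d) (R : ℕ) : Prop :=
  ∀ n : ℕ, n ≤ R → iteratedFDeriv ℝ n (𝓕 ⇑Φ) 0 = 0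

/-- `φ ∈ S₀`: all derivatives of the Fourier transform vanish at the origin. -/
def IsS0 (φ : SchwartzC d) : Prop :=
  ∀ n : ℕ, iteratedFDeriv ℝ n (𝓕 ⇑φ) 0 = 0

/-- Inverse Fourier transform of a Schwartz function, as a Schwartz function. -/
def invF (φ : SchwartzC d) : SchwartzC d := (FourierTransform.fourierCLE ℂ (SchwartzC d) (F := SchwartzC d)).symm φ

/-- Inhomogeneous dyadic resolution of unity `{φ_j}_{j∈ℕ}`, `φ_j = φ(2^{-j}·)` for `j ≥ 1`. -/
structure IsInhomPartition (φ₀ φ : SchwartzC d) : Prop where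
  supp₀ : ∀ ξ : Ed d, 2 < ‖ξ‖ → φ₀ ξ = 0
  supp : ∀ ξ : Ed d, ‖ξ‖ < 1 / 2 ∨ 2 < ‖ξ‖ → φ ξ = 0
  sum_one : ∀ ξ : Ed d, HasSum (fun j : ℕ => (kin φ₀ φ j) (scN j • ξ)) 1

/-- Homogeneous dyadic resolution of unity `{φ_j}_{j∈ℤ}`, `φ_j = φ(2^{-j}·)`. -/
structure IsHomPartition (φ : SchwartzC d) : Prop where
  supp : ∀ ξ : Ed d, ‖ξ‖ < 1 / 2 ∨ 2 < ‖ξ‖ → φ ξ = 0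
  sum_one : ∀ ξ : Ed d, ξ ≠ 0 → HasSum (fun j : ℤ => φ (scZ j • ξ)) 1

/-- `min{p,q}` where `q` may be `∞`. -/
def minpq (p : ℝ) (q : ℝ≥0∞) : ℝ := if q = ∞ then p else min p q.toReal

/-- `1/p` with the convention `1/∞ = 0`. -/
def invE (p : ℝ≥0∞) : ℝ := if p = ∞ then 0 else 1 / p.toReal

end
section Part2
noncomputable section

open MeasureTheory Real SchwartzMap Set
open scoped ENNReal NNReal FourierTransform

variable {d : ℕ}

/-- dyadic factor `2^{e·s}` as an extended nonnegative real. -/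
def dy (e s : ℝ) : ℝ≥0∞ := ENNReal.ofReal ((2 : ℝ) ^ (e * s))

/-- The five quantities `‖f‖₁,…,‖f‖₅` of Theorem 2.2 (inhomogeneous `F`-scale). -/
def QF (Φ₀ Φ : SchwartzC d) (s p : ℝ) (q : ℝ≥0∞) (a : ℝ) :
    Fin 5 → TemperedDist d → ℝ≥0∞ :=
  ![fun f => lpE (ENNReal.ofReal p) (fun x => enn (convAt f Φ₀ 1 x))
      + lpE (ENNReal.ofReal p) (fun x =>
          intAgg q (Ioc 0 1) (fun t => t⁻¹)
            (fun t => ENNReal.ofReal (t ^ (-s)) * enn (convAt f Φ t x))),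
    fun f => lpE (ENNReal.ofReal p) (fun x => peetreAt f Φ₀ a 1 x)
      + lpE (ENNReal.ofReal p) (fun x =>
          intAgg q (Ioc 0 1) (fun t => t⁻¹)
            (fun t => ENNReal.ofReal (t ^ (-s)) * peetreAt f Φ a t x)),
    fun f => lpE (ENNReal.ofReal p) (fun x => enn (convAt f Φ₀ 1 x))
      + lpE (ENNReal.ofReal p) (fun x =>
          tentAgg q (Ioc 0 1)
            (fun t z => ENNReal.ofReal (t ^ (-s)) * enn (convAt f Φ t (x + z)))),
    fun f => lpE (ENNReal.ofReal p) (fun x =>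
        sumAggN q (fun k => dy k s * peetreAt f (kin Φ₀ Φ k) a (scN k) x)),
    fun f => lpE (ENNReal.ofReal p) (fun x =>
        sumAggN q (fun k => dy k s * enn (convAt f (kin Φ₀ Φ k) (scN k) x)))]

/-- The quasi-norm of `F^s_{p,q}(ℝ^d)` built from a dyadic resolution of unity `(φ₀, φ)`. -/
def FnormI (φ₀ φ : SchwartzC d) (s p : ℝ) (q : ℝ≥0∞) (f : TemperedDist d) : ℝ≥0∞ :=
  lpE (ENNReal.ofReal p) (fun x =>
    sumAggN q (fun j => dy j s * enn (convAt f (kin (invF φ₀) (invF φ) j) (scN j) x)))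

/-- The four quantities of the inhomogeneous Besov characterization. -/
def QB (Φ₀ Φ : SchwartzC d) (s : ℝ) (p q : ℝ≥0∞) (a : ℝ) :
    Fin 4 → TemperedDist d → ℝ≥0∞ :=
  ![fun f => lpE p (fun x => enn (convAt f Φ₀ 1 x))
      + intAgg q (Ioc 0 1) (fun t => t⁻¹)
          (fun t => ENNReal.ofReal (t ^ (-s)) * lpE p (fun x => enn (convAt f Φ t x))),
    fun f => lpE p (fun x => peetreAt f Φ₀ a 1 x)
      + intAgg q (Ioc 0 1) (fun t => t⁻¹)
          (fun t => ENNReal.ofReal (t ^ (-s)) * lpE p (fun x => peetreAt f Φ a t x)),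
    fun f => sumAggN q (fun k =>
        dy k s * lpE p (fun x => peetreAt f (kin Φ₀ Φ k) a (scN k) x)),
    fun f => sumAggN q (fun k =>
        dy k s * lpE p (fun x => enn (convAt f (kin Φ₀ Φ k) (scN k) x)))]

/-- The quasi-norm of `B^s_{p,q}(ℝ^d)` built from a dyadic resolution of unity `(φ₀, φ)`. -/
def BnormI (φ₀ φ : SchwartzC d) (s : ℝ) (p q : ℝ≥0∞) (f : TemperedDist d) : ℝ≥0∞ :=
  sumAggN q (fun j =>
    dy j s * lpE p (fun x => enn (convAt f (kin (invF φ₀) (invF φ) j) (scN j) x)))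

/-- The five quantities of the homogeneous `F`-scale characterization. -/
def QFdot (Φ : SchwartzC d) (s p : ℝ) (q : ℝ≥0∞) (a : ℝ) :
    Fin 5 → TemperedDist d → ℝ≥0∞ :=
  ![fun f => lpE (ENNReal.ofReal p) (fun x =>
        intAgg q (Ioi 0) (fun t => t⁻¹)
          (fun t => ENNReal.ofReal (t ^ (-s)) * enn (convAt f Φ t x))),
    fun f => lpE (ENNReal.ofReal p) (fun x =>
        intAgg q (Ioi 0) (fun t => t⁻¹)
          (fun t => ENNReal.ofReal (t ^ (-s)) * peetreAt f Φ a t x)),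
    fun f => lpE (ENNReal.ofReal p) (fun x =>
        tentAgg q (Ioi 0)
          (fun t z => ENNReal.ofReal (t ^ (-s)) * enn (convAt f Φ t (x + z)))),
    fun f => lpE (ENNReal.ofReal p) (fun x =>
        sumAggZ q (fun k => dy k s * peetreAt f Φ a (scZ k) x)),
    fun f => lpE (ENNReal.ofReal p) (fun x =>
        sumAggZ q (fun k => dy k s * enn (convAt f Φ (scZ k) x)))]

/-- The quasi-norm of `Ḟ^s_{p,q}(ℝ^d)` built from a homogeneous resolution of unity `φ`. -/
def FnormH (φ : SchwartzC d) (s p : ℝ) (q : ℝ≥0∞) (f : TemperedDist d) : ℝ≥0∞ :=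
  lpE (ENNReal.ofReal p) (fun x =>
    sumAggZ q (fun j => dy j s * enn (convAt f (invF φ) (scZ j) x)))

/-- The four quantities of the homogeneous Besov characterization. -/
def QBdot (Φ : SchwartzC d) (s : ℝ) (p q : ℝ≥0∞) (a : ℝ) :
    Fin 4 → TemperedDist d → ℝ≥0∞ :=
  ![fun f => intAgg q (Ioi 0) (fun t => t⁻¹)
        (fun t => ENNReal.ofReal (t ^ (-s)) * lpE p (fun x => enn (convAt f Φ t x))),
    fun f => intAgg q (Ioi 0) (fun t => t⁻¹)
        (fun t => ENNReal.ofReal (t ^ (-s)) * lpE p (fun x => peetreAt f Φ a t x)),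
    fun f => sumAggZ q (fun k => dy k s * lpE p (fun x => peetreAt f Φ a (scZ k) x)),
    fun f => sumAggZ q (fun k => dy k s * lpE p (fun x => enn (convAt f Φ (scZ k) x)))]

/-- The quasi-norm of `Ḃ^s_{p,q}(ℝ^d)` built from a homogeneous resolution of unity `φ`. -/
def BnormH (φ : SchwartzC d) (s : ℝ) (p q : ℝ≥0∞) (f : TemperedDist d) : ℝ≥0∞ :=
  sumAggZ q (fun j => dy j s * lpE p (fun x => enn (convAt f (invF φ) (scZ j) x)))

/-- Distributional continuous wavelet transform `W_g f(x,t) = t^{d/2} (g_t ∗ f)(x)`. -/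
def WT (g : SchwartzC d) (f : TemperedDist d) (x : Ed d) (t : ℝ) : ℂ :=
  ((t ^ ((d : ℝ) / 2) : ℝ) : ℂ) * convAt f g t x

end
end Part2
section Part3
noncomputable section

open MeasureTheory Real SchwartzMap Set
open scoped ENNReal NNReal FourierTransform

variable {d : ℕ}

/-! ### Function spaces on the `ax+b`-group `G = ℝ^d × (0,∞)` -/

/-- Left translation on the `ax+b`-group: `L_{(z,r)}F(x,t) = F((x-z)/r, t/r)`. -/
def leftTr (z : Ed d) (r : ℝ) (F : Ed d × ℝ → ℂ) : Ed d × ℝ → ℂ :=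
  fun w => F (r⁻¹ • (w.1 - z), w.2 / r)

/-- Right translation on the `ax+b`-group: `R_{(z,r)}F(x,t) = F(x + t•z, r·t)`. -/
def rightTr (z : Ed d) (r : ℝ) (F : Ed d × ℝ → ℂ) : Ed d × ℝ → ℂ :=
  fun w => F (w.1 + w.2 • z, r * w.2)

/-- Peetre maximal function on the group, for extended-valued `F`. -/
def peetreSupE (a : ℝ) (F : Ed d × ℝ → ℝ≥0∞) (x : Ed d) (t : ℝ) : ℝ≥0∞ :=
  ⨆ y : Ed d, F (x + y, t) / ENNReal.ofReal ((1 + ‖y‖ / t) ^ a)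

/-- Quasi-norm of the Peetre-type space `Ṗ^{s,a}_{p,q}(G)` (extended-valued version). -/
def PGnormE (s a : ℝ) (p q : ℝ≥0∞) (F : Ed d × ℝ → ℝ≥0∞) : ℝ≥0∞ :=
  lpE p (fun x =>
    intAgg q (Ioi 0) (fun t => t ^ (-(d : ℝ) - 1))
      (fun t => ENNReal.ofReal (t ^ (-s)) * peetreSupE a F x t))

/-- Quasi-norm of `Ṗ^{s,a}_{p,q}(G)` of a complex-valued function on the group. -/
def PGnorm (s a : ℝ) (p q : ℝ≥0∞) (F : Ed d × ℝ → ℂ) : ℝ≥0∞ :=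
  PGnormE s a p q (fun w => enn (F w))

/-- Quasi-norm of the space `L̇^s_{p,q}(G)` (extended-valued version). -/
def LGnormE (s : ℝ) (p q : ℝ≥0∞) (F : Ed d × ℝ → ℝ≥0∞) : ℝ≥0∞ :=
  intAgg q (Ioi 0) (fun t => t ^ (-(d : ℝ) - 1))
    (fun t => ENNReal.ofReal (t ^ (-s)) * lpE p (fun x => F (x, t)))

/-- Quasi-norm of `L̇^s_{p,q}(G)` of a complex-valued function on the group. -/
def LGnorm (s : ℝ) (p q : ℝ≥0∞) (F : Ed d × ℝ → ℂ) : ℝ≥0∞ :=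
  LGnormE s p q (fun w => enn (F w))

/-- Quasi-norm of the tent space `Ṫ^s_{p,q}(G)` of a complex-valued function on the group. -/
def TGnorm (s : ℝ) (p : ℝ≥0∞) (q : ℝ≥0∞) (F : Ed d × ℝ → ℂ) : ℝ≥0∞ :=
  lpE p (fun x =>
    tentAgg q (Ioi 0) (fun t z => ENNReal.ofReal (t ^ (-s)) * enn (F (x + z, t))))

/-- The cube `Q_{j,k} = Π_i [α k_i β^{-j}, α(k_i+1)β^{-j}]`. -/
def Qcube (α β : ℝ) (j : ℤ) (k : Fin d → ℤ) : Set (Ed d) :=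
  {x | ∀ i, α * k i * β ^ (-j) ≤ x i ∧ x i ≤ α * (k i + 1) * β ^ (-j)}

/-- The step function `F(x,t) = Σ_{j,k} |λ_{j,k}| χ_{Q_{j,k}}(x) χ_{[β^{-(j+1)},β^{-j}]}(t)`
associated with a sequence `λ` (extended-valued). -/
def stepFn (α β : ℝ) (lam : ℤ → (Fin d → ℤ) → ℂ) : Ed d × ℝ → ℝ≥0∞ :=
  fun w => ∑' (j : ℤ) (k : Fin d → ℤ),
    (Qcube α β j k).indicator (fun _ => (‖lam j k‖₊ : ℝ≥0∞)) w.1 *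
      (Icc (β ^ (-(j + 1)) : ℝ) (β ^ (-j))).indicator (fun _ => 1) w.2

/-! ### The continuous wavelet transform of square-integrable functions -/

variable {V : Type*} [NormedAddCommGroup V] [InnerProductSpace ℝ V]
  [MeasurableSpace V] [BorelSpace V] [FiniteDimensional ℝ V]

/-- Condition `(D)`: rapid polynomial decay. -/
def CondD (Ψ : V → ℂ) : Prop :=
  ∀ N : ℕ, ∃ C : ℝ, ∀ x, ‖Ψ x‖ ≤ C / (1 + ‖x‖) ^ N

/-- Condition `(M_{L-1})`: vanishing moments of all orders `< L` (vacuous for `L = 0`). -/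
def CondM (Ψ : V → ℂ) (L : ℕ) : Prop :=
  ∀ n : ℕ, n < L → iteratedFDeriv ℝ n (𝓕 Ψ) 0 = 0

end
end Part3
section Part4
noncomputable section

open MeasureTheory Real SchwartzMap Set
open scoped ENNReal NNReal FourierTransform

variable {V : Type*} [NormedAddCommGroup V] [InnerProductSpace ℝ V]
  [MeasureSpace V] [BorelSpace V] [FiniteDimensional ℝ V]

/-- Condition `(S_K)`: `(1+|ξ|)^K |D^ᾱ ℱΨ(ξ)|` is integrable for every multi-index. -/
def CondS (Ψ : V → ℂ) (K : ℝ) : Prop :=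
  ∀ n : ℕ, Integrable (fun ξ : V =>
    (1 + ‖ξ‖) ^ K * ‖iteratedFDeriv ℝ n (𝓕 Ψ) ξ‖) volume

/-- The continuous wavelet transform `W_g f(x,t) = ⟨T_x D_t^{L₂} g, f⟩` of functions. -/
def CWT (g f : V → ℂ) (x : V) (t : ℝ) : ℂ :=
  ∫ y : V, (starRingEnd ℂ)
      (((t ^ (-(Module.finrank ℝ V : ℝ) / 2) : ℝ) : ℂ) * g (t⁻¹ • (y - x))) * f y

end
end Part4
open MeasureTheory Real SchwartzMap Set
open scoped ENNReal NNReal FourierTransform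

section AuxPG
noncomputable section
open MeasureTheory Real Set
open scoped ENNReal

variable {d : ℕ}

/-- Affine measurable equivalence `x ↦ ρ • x + z` on `Ed d`. -/
def affME (ρ : ℝ) (hρ : ρ ≠ 0) (z : Ed d) : Ed d ≃ᵐ Ed d :=
  (Homeomorph.smulOfNeZero ρ hρ).toMeasurableEquiv.trans
    (Homeomorph.addRight z).toMeasurableEquiv

lemma map_affME (ρ : ℝ) (hρ : ρ ≠ 0) (z : Ed d) :
    Measure.map (affME ρ hρ z) (volume : Measure (Ed d)) =
      ENNReal.ofReal |(ρ ^ d)⁻¹| • volume := by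
  have h : ⇑(affME ρ hρ z) = (fun x : Ed d => x + z) ∘ (fun x : Ed d => ρ • x) := rfl
  have hsm : Measurable (fun x : Ed d => ρ • x) := measurable_id.const_smul ρ
  rw [h, ← Measure.map_map (measurable_add_const z) hsm]
  have h2 : Measure.map (fun x : Ed d => ρ • x) volume
      = ENNReal.ofReal |(ρ ^ d)⁻¹| • volume := by
    have := Measure.map_addHaar_smul (volume : Measure (Ed d)) hρ
    rwa [finrank_euclideanSpace_fin] at this
  rw [h2, Measure.map_smul, map_add_right_eq_self volume z]

lemma aff_density (ρ : ℝ) (hρ : 0 < ρ) :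
    |((ρ : ℝ) ^ d)⁻¹| = ρ ^ (-(d : ℝ)) := by
  rw [abs_of_pos (by positivity), Real.rpow_neg hρ.le, Real.rpow_natCast]

lemma lintegral_comp_affME (ρ : ℝ) (hρ : 0 < ρ) (z : Ed d) (g : Ed d → ℝ≥0∞) :
    ∫⁻ x, g (ρ • x + z) = ENNReal.ofReal (ρ ^ (-(d : ℝ))) * ∫⁻ x, g x := by
  have h := MeasureTheory.lintegral_map_equiv (μ := volume) g (affME ρ hρ.ne' z)
  rw [map_affME, lintegral_smul_measure, aff_density ρ hρ] at h
  exact h.symm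

lemma essSup_comp_affME (ρ : ℝ) (hρ : 0 < ρ) (z : Ed d) (g : Ed d → ℝ≥0∞) :
    essSup (fun x : Ed d => g (ρ • x + z)) volume = essSup g volume := by
  have h := (affME ρ hρ.ne' z).measurableEmbedding.essSup_map_measure
    (g := g) (μ := (volume : Measure (Ed d)))
  rw [map_affME, essSup_ennreal_smul_measure] at h
  · exact h.symm
  · rw [aff_density ρ hρ]
    exact (ENNReal.ofReal_pos.mpr (Real.rpow_pos_of_pos hρ _)).ne'

def mulME (ρ : ℝ) (hρ : ρ ≠ 0) : ℝ ≃ᵐ ℝ :=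
  (Homeomorph.mulLeft₀ ρ hρ).toMeasurableEquiv

lemma lintegral_comp_mulL (ρ : ℝ) (hρ : 0 < ρ) (g : ℝ → ℝ≥0∞) :
    ∫⁻ t, g (ρ * t) = ENNReal.ofReal ρ⁻¹ * ∫⁻ t, g t := by
  have h := MeasureTheory.lintegral_map_equiv (μ := volume) g (mulME ρ hρ.ne')
  have hm : Measure.map (⇑(mulME ρ hρ.ne')) volume = ENNReal.ofReal |ρ⁻¹| • volume :=
    Real.map_volume_mul_left hρ.ne'
  rw [hm, lintegral_smul_measure, abs_of_pos (inv_pos.mpr hρ)] at h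
  exact h.symm

lemma lintegral_Ioi_comp_mulL (ρ : ℝ) (hρ : 0 < ρ) (g : ℝ → ℝ≥0∞) :
    ∫⁻ t in Ioi (0 : ℝ), g (ρ * t) = ENNReal.ofReal ρ⁻¹ * ∫⁻ t in Ioi (0 : ℝ), g t := by
  rw [← lintegral_indicator measurableSet_Ioi, ← lintegral_indicator measurableSet_Ioi,
    ← lintegral_comp_mulL ρ hρ (fun t => (Ioi (0 : ℝ)).indicator g t)]
  congr 1
  funext t
  have hiff : (0 < ρ * t) ↔ 0 < t := ⟨fun h => by nlinarith, fun h => mul_pos hρ h⟩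
  simp only [indicator_apply, mem_Ioi, hiff]

lemma biSup_Ioi_comp_mulL (ρ : ℝ) (hρ : 0 < ρ) (H : ℝ → ℝ≥0∞) :
    ⨆ t ∈ Ioi (0 : ℝ), H (ρ * t) = ⨆ t ∈ Ioi (0 : ℝ), H t := by
  apply le_antisymm
  · exact iSup₂_le fun t ht => le_iSup₂_of_le (ρ * t) (mul_pos hρ (mem_Ioi.mp ht)) le_rfl
  · refine iSup₂_le fun t ht => le_iSup₂_of_le (ρ⁻¹ * t)
      (mem_Ioi.mpr (mul_pos (inv_pos.mpr hρ) (mem_Ioi.mp ht))) ?_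
    rw [← mul_assoc, mul_inv_cancel₀ hρ.ne', one_mul]

lemma intAgg_scale (dd : ℕ) {q : ℝ≥0∞} (hq : 0 < q) (s : ℝ) {ρ : ℝ} (hρ : 0 < ρ)
    (P : ℝ → ℝ≥0∞) :
    intAgg q (Ioi 0) (fun t => t ^ (-(dd : ℝ) - 1))
        (fun t => ENNReal.ofReal (t ^ (-s)) * P (ρ * t))
      = ENNReal.ofReal (ρ ^ (s + (dd : ℝ) * invE q)) *
        intAgg q (Ioi 0) (fun t => t ^ (-(dd : ℝ) - 1))
          (fun t => ENNReal.ofReal (t ^ (-s)) * P t) := by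
  have hρi : (0 : ℝ) < ρ⁻¹ := inv_pos.mpr hρ
  have hcomp : ∀ e : ℝ, ∀ t ∈ Ioi (0 : ℝ), ((ρ⁻¹ * t : ℝ) ^ e) = ρ ^ (-e) * t ^ e := by
    intro e t ht
    rw [Real.mul_rpow hρi.le (le_of_lt (mem_Ioi.mp ht)), Real.inv_rpow hρ.le,
      ← Real.rpow_neg hρ.le]
  by_cases hq' : q = ∞
  · rw [intAgg, intAgg, if_pos hq', if_pos hq']
    have h1 := biSup_Ioi_comp_mulL ρ⁻¹ hρi
      (fun t => ENNReal.ofReal (t ^ (-s)) * P (ρ * t))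
    rw [← h1]
    have h2 : ∀ t, t ∈ Ioi (0 : ℝ) →
        ENNReal.ofReal ((ρ⁻¹ * t) ^ (-s)) * P (ρ * (ρ⁻¹ * t))
          = ENNReal.ofReal (ρ ^ s) * (ENNReal.ofReal (t ^ (-s)) * P t) := by
      intro t ht
      rw [hcomp (-s) t ht, neg_neg, ← mul_assoc ρ, mul_inv_cancel₀ hρ.ne', one_mul,
        ENNReal.ofReal_mul (Real.rpow_pos_of_pos hρ s).le, mul_assoc]
    rw [biSup_congr h2]
    simp_rw [ENNReal.mul_iSup]
    rw [invE, if_pos hq']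
    norm_num
  · have hqr : 0 < q.toReal := ENNReal.toReal_pos hq.ne' hq'
    rw [intAgg, intAgg, if_neg hq', if_neg hq']
    set qr := q.toReal with hqrdef
    set B : ℝ → ℝ≥0∞ := fun t =>
      (ENNReal.ofReal (t ^ (-s)) * P t) ^ qr * ENNReal.ofReal (t ^ (-(dd : ℝ) - 1)) with hB
    set g : ℝ → ℝ≥0∞ := fun t =>
      (ENNReal.ofReal (t ^ (-s)) * P (ρ * t)) ^ qr *
        ENNReal.ofReal (t ^ (-(dd : ℝ) - 1)) with hg
    set c : ℝ≥0∞ := (ENNReal.ofReal (ρ ^ s)) ^ qr * ENNReal.ofReal (ρ ^ ((dd : ℝ) + 1))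
      with hc
    have h1 : ∫⁻ t in Ioi (0 : ℝ), g (ρ⁻¹ * t)
        = ENNReal.ofReal ρ * ∫⁻ t in Ioi (0 : ℝ), g t := by
      rw [lintegral_Ioi_comp_mulL ρ⁻¹ hρi g, inv_inv]
    have h2 : ∀ᵐ t ∂(volume : Measure ℝ), t ∈ Ioi (0 : ℝ) → g (ρ⁻¹ * t) = c * B t := by
      refine Filter.Eventually.of_forall fun t ht => ?_
      rw [hg]
      simp only
      rw [← mul_assoc ρ, mul_inv_cancel₀ hρ.ne', one_mul, hcomp (-s) t ht, neg_neg]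
      have hexp : -(-(dd : ℝ) - 1) = (dd : ℝ) + 1 := by ring
      have hrw : ((ρ⁻¹ * t : ℝ) ^ (-(dd : ℝ) - 1))
          = ρ ^ ((dd : ℝ) + 1) * t ^ (-(dd : ℝ) - 1) := by
        rw [hcomp (-(dd : ℝ) - 1) t ht, hexp]
      rw [hrw, ENNReal.ofReal_mul (Real.rpow_pos_of_pos hρ s).le,
        ENNReal.ofReal_mul (Real.rpow_pos_of_pos hρ _).le,
        hc, hB]
      simp only [ENNReal.mul_rpow_of_nonneg _ _ hqr.le]
      ring
    have h3 : ∫⁻ t in Ioi (0 : ℝ), g (ρ⁻¹ * t) = c * ∫⁻ t in Ioi (0 : ℝ), B t := by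
      rw [setLIntegral_congr_fun_ae measurableSet_Ioi h2]
      exact lintegral_const_mul' _ _ (ENNReal.mul_ne_top
        (ENNReal.rpow_ne_top_of_nonneg hqr.le ENNReal.ofReal_ne_top) ENNReal.ofReal_ne_top)
    have h4 : ∫⁻ t in Ioi (0 : ℝ), g t
        = ENNReal.ofReal (ρ ^ (s * qr + (dd : ℝ))) * ∫⁻ t in Ioi (0 : ℝ), B t := by
      have hne0 : (ENNReal.ofReal ρ) ≠ 0 := (ENNReal.ofReal_pos.mpr hρ).ne'
      have h5 : ∫⁻ t in Ioi (0 : ℝ), g t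
          = (ENNReal.ofReal ρ)⁻¹ * (c * ∫⁻ t in Ioi (0 : ℝ), B t) := by
        rw [← h3, h1, ← mul_assoc, ENNReal.inv_mul_cancel hne0 ENNReal.ofReal_ne_top,
          one_mul]
      rw [h5, ← mul_assoc]
      congr 1
      rw [hc, ENNReal.ofReal_rpow_of_pos (Real.rpow_pos_of_pos hρ s),
        ← ENNReal.ofReal_inv_of_pos hρ,
        ← ENNReal.ofReal_mul (by positivity : (0:ℝ) ≤ (ρ ^ s) ^ qr),
        ← ENNReal.ofReal_mul (inv_pos.mpr hρ).le]
      congr 1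
      rw [← Real.rpow_neg_one ρ, ← Real.rpow_mul hρ.le s qr, ← Real.rpow_add hρ,
        ← Real.rpow_add hρ]
      congr 1
      ring
    rw [h4, ENNReal.mul_rpow_of_nonneg _ _ (by positivity),
      ENNReal.ofReal_rpow_of_pos (Real.rpow_pos_of_pos hρ _),
      ← Real.rpow_mul hρ.le]
    congr 2
    rw [invE, if_neg hq']
    field_simp
    rw [← hqrdef]
    congr 1
    rw [add_div, mul_div_assoc, div_self hqr.ne', mul_one]

lemma lpE_const_mul (p : ℝ≥0∞) (hp : 0 < p) {c : ℝ≥0∞} (hc : c ≠ ∞) (J : Ed d → ℝ≥0∞) :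
    lpE p (fun x => c * J x) = c * lpE p J := by
  by_cases hp' : p = ∞
  · rw [lpE, lpE, if_pos hp', if_pos hp', ENNReal.essSup_const_mul]
  · rw [lpE, lpE, if_neg hp', if_neg hp']
    have hpr : 0 < p.toReal := ENNReal.toReal_pos hp.ne' hp'
    simp_rw [ENNReal.mul_rpow_of_nonneg _ _ hpr.le]
    rw [lintegral_const_mul' _ _ (ENNReal.rpow_ne_top_of_nonneg hpr.le hc),
      ENNReal.mul_rpow_of_nonneg _ _ (by positivity), ← ENNReal.rpow_mul,
      mul_one_div, div_self hpr.ne', ENNReal.rpow_one]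

lemma lpE_comp_aff (p : ℝ≥0∞) (hp : 0 < p) {ρ : ℝ} (hρ : 0 < ρ) (z : Ed d)
    (J : Ed d → ℝ≥0∞) :
    lpE p (fun x => J (ρ • x + z)) = ENNReal.ofReal (ρ ^ (-(d : ℝ) * invE p)) * lpE p J := by
  by_cases hp' : p = ∞
  · rw [lpE, lpE, if_pos hp', if_pos hp', invE, if_pos hp', essSup_comp_affME ρ hρ z J]
    norm_num
  · rw [lpE, lpE, if_neg hp', if_neg hp', invE, if_neg hp']
    have hpr : 0 < p.toReal := ENNReal.toReal_pos hp.ne' hp'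
    rw [lintegral_comp_affME ρ hρ z (fun x => J x ^ p.toReal),
      ENNReal.mul_rpow_of_nonneg _ _ (by positivity),
      ENNReal.ofReal_rpow_of_pos (Real.rpow_pos_of_pos hρ _), ← Real.rpow_mul hρ.le]

lemma lpE_mono (p : ℝ≥0∞) {J K : Ed d → ℝ≥0∞} (h : ∀ x, J x ≤ K x) :
    lpE p J ≤ lpE p K := by
  rw [lpE, lpE]
  split
  · exact essSup_mono_ae (Filter.Eventually.of_forall h)
  · exact ENNReal.rpow_le_rpow
      (lintegral_mono fun x => ENNReal.rpow_le_rpow (h x) ENNReal.toReal_nonneg)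
      (by positivity)

lemma intAgg_mono (q : ℝ≥0∞) (w : ℝ → ℝ) {G H : ℝ → ℝ≥0∞}
    (h : ∀ t ∈ Ioi (0 : ℝ), G t ≤ H t) :
    intAgg q (Ioi 0) w G ≤ intAgg q (Ioi 0) w H := by
  rw [intAgg, intAgg]
  split
  · exact iSup₂_mono h
  · refine ENNReal.rpow_le_rpow ?_ (by positivity)
    refine lintegral_mono_ae ((ae_restrict_iff' measurableSet_Ioi).2
      (Filter.Eventually.of_forall fun t ht => ?_))
    exact mul_le_mul_left (ENNReal.rpow_le_rpow (h t ht) ENNReal.toReal_nonneg) _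

lemma intAgg_const_mul (q : ℝ≥0∞) (hq : 0 < q) (w : ℝ → ℝ) {c : ℝ≥0∞} (hc : c ≠ ∞)
    (G : ℝ → ℝ≥0∞) :
    intAgg q (Ioi 0) w (fun t => c * G t) = c * intAgg q (Ioi 0) w G := by
  by_cases hq' : q = ∞
  · rw [intAgg, intAgg, if_pos hq', if_pos hq']
    simp_rw [ENNReal.mul_iSup]
  · rw [intAgg, intAgg, if_neg hq', if_neg hq']
    have hqr : 0 < q.toReal := ENNReal.toReal_pos hq.ne' hq'
    simp_rw [ENNReal.mul_rpow_of_nonneg _ _ hqr.le, mul_assoc]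
    rw [lintegral_const_mul' _ _ (ENNReal.rpow_ne_top_of_nonneg hqr.le hc),
      ENNReal.mul_rpow_of_nonneg _ _ (by positivity), ← ENNReal.rpow_mul,
      mul_one_div, div_self hqr.ne', ENNReal.rpow_one]

lemma peetre_leftTr (F : Ed d × ℝ → ℂ) (z : Ed d) {r : ℝ} (hr : 0 < r) (a : ℝ)
    (x : Ed d) (t : ℝ) :
    peetreSupE a (fun w => enn (leftTr z r F w)) x t
      = peetreSupE a (fun w => enn (F w)) (r⁻¹ • (x - z)) (r⁻¹ * t) := by
  rw [peetreSupE, peetreSupE]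
  have hsurj : Function.Surjective (fun y : Ed d => r • y) :=
    fun y => ⟨r⁻¹ • y, by
      show r • r⁻¹ • y = y
      rw [smul_smul, mul_inv_cancel₀ hr.ne', one_smul]⟩
  rw [← hsurj.iSup_comp]
  refine iSup_congr fun y => ?_
  have h1 : r⁻¹ • (x + r • y - z) = r⁻¹ • (x - z) + y := by
    have h : x + r • y - z = (x - z) + r • y := by abel
    rw [h, smul_add, smul_smul, inv_mul_cancel₀ hr.ne', one_smul]
  have h2 : ‖r • y‖ / t = ‖y‖ / (r⁻¹ * t) := by
    rw [norm_smul, Real.norm_eq_abs, abs_of_pos hr, inv_mul_eq_div, div_div_eq_mul_div,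
      mul_comm]
  simp only [leftTr]
  rw [h1, h2, div_eq_inv_mul t r]

lemma peetre_rightTr (F : Ed d × ℝ → ℂ) (z : Ed d) {r : ℝ} (hr : 0 < r) {a : ℝ}
    (ha : 0 < a) (x : Ed d) {t : ℝ} (ht : 0 < t) :
    peetreSupE a (fun w => enn (rightTr z r F w)) x t
      ≤ ENNReal.ofReal (max 1 (r ^ (-a)) * (1 + ‖z‖) ^ a) *
        peetreSupE a (fun w => enn (F w)) x (r * t) := by
  rw [peetreSupE, peetreSupE]
  refine iSup_le fun y => ?_
  simp only [rightTr]
  set K : ℝ := max 1 (r ^ (-a)) * (1 + ‖z‖) ^ a with hK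
  have hrneg : (0 : ℝ) < r ^ (-a) := Real.rpow_pos_of_pos hr _
  have hK0 : 0 < K := by positivity
  set d1 : ℝ := (1 + ‖y‖ / t) ^ a with hd1def
  set d2 : ℝ := (1 + ‖y + t • z‖ / (r * t)) ^ a with hd2def
  have hd1 : (0 : ℝ) < d1 := by positivity
  have hd2 : (0 : ℝ) < d2 := by positivity
  have hreal : d2 ≤ K * d1 := by
    set M : ℝ := max 1 r⁻¹ with hM
    have hM1 : (1 : ℝ) ≤ M := le_max_left _ _
    have hM2 : r⁻¹ ≤ M := le_max_right _ _
    have hM0 : (0 : ℝ) ≤ M := by linarith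
    have hbase : 1 + ‖y + t • z‖ / (r * t) ≤ M * (1 + ‖z‖) * (1 + ‖y‖ / t) := by
      have h1 : ‖y + t • z‖ ≤ ‖y‖ + t * ‖z‖ := by
        calc ‖y + t • z‖ ≤ ‖y‖ + ‖t • z‖ := norm_add_le _ _
          _ = ‖y‖ + t * ‖z‖ := by rw [norm_smul, Real.norm_eq_abs, abs_of_pos ht]
      have hu : (0 : ℝ) ≤ ‖y‖ / t := by positivity
      have hz0 : (0 : ℝ) ≤ ‖z‖ := norm_nonneg z
      have key : ‖y + t • z‖ / (r * t) ≤ (‖y‖ / t) * r⁻¹ + ‖z‖ * r⁻¹ := by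
        rw [div_le_iff₀ (by positivity)]
        calc ‖y + t • z‖ ≤ ‖y‖ + t * ‖z‖ := h1
          _ = ((‖y‖ / t) * r⁻¹ + ‖z‖ * r⁻¹) * (r * t) := by field_simp
      have hMz : 0 ≤ M * ‖z‖ * (‖y‖ / t) := by positivity
      nlinarith [mul_le_mul_of_nonneg_left hM2 hu, mul_le_mul_of_nonneg_left hM2 hz0]
    have hMa : M ^ a = max 1 (r ^ (-a)) := by
      rcases le_total 1 r with h | h
      · have e1 : r⁻¹ ≤ 1 := inv_le_one_of_one_le₀ h
        have e2 : r ^ (-a) ≤ 1 :=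
          Real.rpow_le_one_of_one_le_of_nonpos h (by linarith)
        rw [hM, max_eq_left e1, max_eq_left e2, Real.one_rpow]
      · have e1 : (1 : ℝ) ≤ r⁻¹ := by
          nlinarith [mul_inv_cancel₀ hr.ne', inv_pos.mpr hr, h]
        have e2 : (1 : ℝ) ≤ r ^ (-a) :=
          Real.one_le_rpow_of_pos_of_le_one_of_nonpos hr h (by linarith)
        rw [hM, max_eq_right e1, max_eq_right e2, Real.inv_rpow hr.le,
          ← Real.rpow_neg hr.le]
    have hfinal : d2 ≤ (M * (1 + ‖z‖)) ^ a * d1 := by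
      rw [hd2def, hd1def, ← Real.mul_rpow (by positivity) (by positivity)]
      exact Real.rpow_le_rpow (by positivity) hbase ha.le
    calc d2 ≤ (M * (1 + ‖z‖)) ^ a * d1 := hfinal
      _ = K * d1 := by
        rw [Real.mul_rpow hM0 (by positivity), hMa, hK]
  have hdiv : (ENNReal.ofReal d1)⁻¹ ≤ ENNReal.ofReal K * (ENNReal.ofReal d2)⁻¹ := by
    rw [← ENNReal.ofReal_inv_of_pos hd1, ← ENNReal.ofReal_inv_of_pos hd2,
      ← ENNReal.ofReal_mul hK0.le]
    refine ENNReal.ofReal_le_ofReal ?_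
    rw [show K * d2⁻¹ = K / d2 from (div_eq_mul_inv K d2).symm, le_div_iff₀ hd2,
      inv_mul_eq_div, div_le_iff₀ hd1]
    linarith [hreal]
  calc enn (F (x + y + t • z, r * t)) / ENNReal.ofReal d1
      = enn (F (x + (y + t • z), r * t)) * (ENNReal.ofReal d1)⁻¹ := by
        rw [div_eq_mul_inv, add_assoc]
    _ ≤ enn (F (x + (y + t • z), r * t)) * (ENNReal.ofReal K * (ENNReal.ofReal d2)⁻¹) :=
        mul_le_mul' le_rfl hdiv
    _ = ENNReal.ofReal K * (enn (F (x + (y + t • z), r * t)) / ENNReal.ofReal d2) := by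
        rw [div_eq_mul_inv]; ring
    _ ≤ ENNReal.ofReal K * ⨆ y' : Ed d,
          enn (F (x + y', r * t)) / ENNReal.ofReal ((1 + ‖y'‖ / (r * t)) ^ a) := by
        refine mul_le_mul' le_rfl ?_
        have h := le_iSup (fun y' : Ed d =>
          enn (F (x + y', r * t)) / ENNReal.ofReal ((1 + ‖y'‖ / (r * t)) ^ a)) (y + t • z)
        exact h

end
end AuxPG

/-- Translation invariance of the Peetre-type spaces `Ṗ^{s,a}_{p,q}(G)` on the
`ax+b`-group (Proposition 4.2): the left translation acts with operator norm
exactly `r^{d(1/p-1/q)-s}` and the right translation is bounded by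
`r^{s+d/q} max{1, r^{-a}} (1+|z|)^a`. -/
theorem statement9 (d : ℕ) (hd : 1 ≤ d) (s : ℝ) (p q : ℝ≥0∞)
    (hp : 0 < p) (hq : 0 < q) (a : ℝ) (ha : 0 < a)
    (z : Ed d) (r : ℝ) (hr : 0 < r) :
    (∀ F : Ed d × ℝ → ℂ, Measurable F →
        PGnorm s a p q (leftTr z r F) =
          ENNReal.ofReal (r ^ ((d : ℝ) * (invE p - invE q) - s)) * PGnorm s a p q F) ∧
    (∀ F : Ed d × ℝ → ℂ, Measurable F →
        PGnorm s a p q (rightTr z r F) ≤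
          ENNReal.ofReal (r ^ (s + (d : ℝ) * invE q) * max 1 (r ^ (-a)) * (1 + ‖z‖) ^ a) *
            PGnorm s a p q F) := by
  have hri : (0 : ℝ) < r⁻¹ := inv_pos.mpr hr
  have hconv : ∀ e : ℝ, (r⁻¹ : ℝ) ^ e = r ^ (-e) := fun e => by
    rw [Real.inv_rpow hr.le, ← Real.rpow_neg hr.le]
  constructor
  · intro F _
    rw [PGnorm, PGnorm, PGnormE, PGnormE]
    set Fe : Ed d × ℝ → ℝ≥0∞ := fun w => enn (F w) with hFe
    set I : Ed d → ℝ≥0∞ := fun x => intAgg q (Ioi 0) (fun t => t ^ (-(d : ℝ) - 1))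
      (fun t => ENNReal.ofReal (t ^ (-s)) * peetreSupE a Fe x t) with hI
    have h2 : (fun x => intAgg q (Ioi 0) (fun t => t ^ (-(d : ℝ) - 1))
        (fun t => ENNReal.ofReal (t ^ (-s)) *
          peetreSupE a (fun w => enn (leftTr z r F w)) x t))
        = fun x => ENNReal.ofReal ((r⁻¹ : ℝ) ^ (s + (d : ℝ) * invE q)) *
            I (r⁻¹ • x + -(r⁻¹ • z)) := by
      funext x
      have h1 : (fun t => ENNReal.ofReal (t ^ (-s)) *
          peetreSupE a (fun w => enn (leftTr z r F w)) x t)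
          = fun t => ENNReal.ofReal (t ^ (-s)) *
              peetreSupE a Fe (r⁻¹ • (x - z)) (r⁻¹ * t) := by
        funext t
        rw [peetre_leftTr F z hr a x t]
      rw [h1, intAgg_scale d hq s hri (fun u => peetreSupE a Fe (r⁻¹ • (x - z)) u), hI]
      have harg : r⁻¹ • (x - z) = r⁻¹ • x + -(r⁻¹ • z) := by
        rw [smul_sub, sub_eq_add_neg]
      rw [harg]
    rw [h2, lpE_const_mul p hp ENNReal.ofReal_ne_top,
      lpE_comp_aff p hp hri (-(r⁻¹ • z)) I, ← mul_assoc, hconv, hconv,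
      ← ENNReal.ofReal_mul (Real.rpow_pos_of_pos hr _).le, ← Real.rpow_add hr]
    congr 2
    ring
  · intro F _
    rw [PGnorm, PGnorm, PGnormE, PGnormE]
    set Fe : Ed d × ℝ → ℝ≥0∞ := fun w => enn (F w) with hFe
    set I : Ed d → ℝ≥0∞ := fun x => intAgg q (Ioi 0) (fun t => t ^ (-(d : ℝ) - 1))
      (fun t => ENNReal.ofReal (t ^ (-s)) * peetreSupE a Fe x t) with hI
    set C : ℝ≥0∞ := ENNReal.ofReal (max 1 (r ^ (-a)) * (1 + ‖z‖) ^ a) with hC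
    have step1 : ∀ x : Ed d, intAgg q (Ioi 0) (fun t => t ^ (-(d : ℝ) - 1))
        (fun t => ENNReal.ofReal (t ^ (-s)) *
          peetreSupE a (fun w => enn (rightTr z r F w)) x t)
        ≤ C * ENNReal.ofReal (r ^ (s + (d : ℝ) * invE q)) * I x := by
      intro x
      have hA : intAgg q (Ioi 0) (fun t => t ^ (-(d : ℝ) - 1))
          (fun t => ENNReal.ofReal (t ^ (-s)) *
            peetreSupE a (fun w => enn (rightTr z r F w)) x t)
          ≤ intAgg q (Ioi 0) (fun t => t ^ (-(d : ℝ) - 1))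
            (fun t => C * (ENNReal.ofReal (t ^ (-s)) * peetreSupE a Fe x (r * t))) := by
        refine intAgg_mono q _ fun t ht => ?_
        have hb := peetre_rightTr F z hr ha x (mem_Ioi.mp ht)
        have h3 : ENNReal.ofReal (t ^ (-s)) *
            peetreSupE a (fun w => enn (rightTr z r F w)) x t
            ≤ ENNReal.ofReal (t ^ (-s)) * (C * peetreSupE a Fe x (r * t)) :=
          mul_le_mul' le_rfl hb
        refine h3.trans (le_of_eq ?_)
        ring
      have hB := intAgg_const_mul q hq (fun t : ℝ => t ^ (-(d : ℝ) - 1))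
        (c := C) ENNReal.ofReal_ne_top
        (fun t => ENNReal.ofReal (t ^ (-s)) * peetreSupE a Fe x (r * t))
      have hC2 := intAgg_scale d hq s hr (fun u => peetreSupE a Fe x u)
      refine hA.trans (le_of_eq ?_)
      rw [hB, hC2, hI, ← mul_assoc]
    refine le_trans (lpE_mono p step1) (le_of_eq ?_)
    rw [lpE_const_mul p hp
      (ENNReal.mul_ne_top ENNReal.ofReal_ne_top ENNReal.ofReal_ne_top) I,
      ← ENNReal.ofReal_mul (by positivity)]
    congr 2
    ring
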